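/- Let Φ_F = {±e_i : 1 ≤ i ≤ 4} ∪ {±e_i ± e_j : 1 ≤ i < j ≤ 4} ∪ {(±1/2, ±1/2, ±1/2, ±1/2)} be the set of roots of type F_4 in ℝ^4, and let M = {a ∈ ℤ^4 : a_1 + a_2 + a_3 + a_4 is even}. For every even integer q ≥ 0, the number of points u ∈ M satisfying |⟨u, v⟩| ≤ q for all v ∈ Φ_F equals q^4 + 2q^3 + 2q^2 + 4q + 1. -/
import Mathlib


open Finset

/-- The `i`-th standard basis vector of `ℝ^n`. -/
noncomputable def stdBasis (n : ℕ) (i : Fin n) : Fin n → ℝ := fun j => if j = i then 1 else 0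

/-- The standard inner product on `ℝ^n`. -/
noncomputable def innerProd {n : ℕ} (u v : Fin n → ℝ) : ℝ := ∑ i, u i * v i

/-- The roots of type `F_4`: `±e_i`, `±e_i ± e_j` for `i < j`, and `(±1/2, ±1/2, ±1/2, ±1/2)`. -/
noncomputable def typeF : Set (Fin 4 → ℝ) :=
  {v | ∃ i, v = stdBasis 4 i ∨ v = -stdBasis 4 i} ∪
  {v | ∃ i j, i < j ∧ ∃ ε δ : ℝ, (ε = 1 ∨ ε = -1) ∧ (δ = 1 ∨ δ = -1) ∧
    v = ε • stdBasis 4 i + δ • stdBasis 4 j} ∪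
  {v | ∀ i, v i = 1/2 ∨ v i = -1/2}

/-- The dual lattice of the `F_4` root lattice: integer vectors with even coordinate sum. -/
def evenLattice : Set (Fin 4 → ℝ) :=
  {a | (∀ i, ∃ m : ℤ, a i = m) ∧ ∃ m : ℤ, ∑ i, a i = 2 * m}

/- ### Auxiliary machinery -/

lemma L1 (m : ℕ) (s : ℤ) :
    (∑ x ∈ Icc (-(m:ℤ)) m, if 2 ∣ (s + x) then (1:ℕ) else 0)
      = m + (if 2 ∣ (s + m) then 1 else 0) := by
  induction m with
  | zero =>
    rw [show Icc (-((0:ℕ):ℤ)) ((0:ℕ):ℤ) = {0} by rfl, sum_singleton]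
    norm_num
  | succ m ih =>
    have hins : Icc (-((m+1:ℕ):ℤ)) ((m+1:ℕ):ℤ)
        = insert (-((m:ℤ)+1)) (insert ((m:ℤ)+1) (Icc (-(m:ℤ)) m)) := by
      ext x; simp [mem_Icc]; push_cast; omega
    rw [hins, sum_insert (by simp [mem_Icc]; omega),
      sum_insert (by simp [mem_Icc]; try omega), ih]
    push_cast
    split_ifs <;> omega

lemma iteCongr {p q : Prop} [Decidable p] [Decidable q] (h : p ↔ q) :
    (if p then (1:ℕ) else 0) = if q then 1 else 0 := by simp [h]

lemma L2 (m : ℕ) (s : ℤ) :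
    (∑ b ∈ Icc (-(m:ℤ)) m, ∑ c ∈ Icc (-(m:ℤ)) m, if 2 ∣ (s + b + c) then (1:ℕ) else 0)
      = (2*m+1) * m + m + (if 2 ∣ s then 1 else 0) := by
  have h1 : ∀ b ∈ Icc (-(m:ℤ)) m,
      (∑ c ∈ Icc (-(m:ℤ)) m, if 2 ∣ (s + b + c) then (1:ℕ) else 0)
        = m + (if 2 ∣ ((s + m) + b) then 1 else 0) := by
    intro b _
    rw [L1 m (s + b)]
    congr 1
    exact iteCongr (by omega)
  rw [sum_congr rfl h1, sum_add_distrib, sum_const, Int.card_Icc, L1 m (s + m)]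
  have : ((m:ℤ) + 1 - -(m:ℤ)).toNat = 2*m+1 := by omega
  rw [this]
  have h2 : (if 2 ∣ (s + m + m) then (1:ℕ) else 0) = if 2 ∣ s then 1 else 0 :=
    iteCongr (by omega)
  rw [h2]; ring

lemma L3 (m : ℕ) (s : ℤ) :
    (∑ b ∈ Icc (-(m:ℤ)) m, ∑ c ∈ Icc (-(m:ℤ)) m, ∑ d ∈ Icc (-(m:ℤ)) m,
        if 2 ∣ (s + b + c + d) then (1:ℕ) else 0)
      = (2*m+1) * ((2*m+1) * m + m) + m + (if 2 ∣ (s + m) then 1 else 0) := by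
  have h1 : ∀ b ∈ Icc (-(m:ℤ)) m,
      (∑ c ∈ Icc (-(m:ℤ)) m, ∑ d ∈ Icc (-(m:ℤ)) m,
          if 2 ∣ (s + b + c + d) then (1:ℕ) else 0)
        = (2*m+1) * m + m + (if 2 ∣ (s + b) then 1 else 0) := fun b _ => L2 m (s + b)
  rw [sum_congr rfl h1, sum_add_distrib, sum_const, Int.card_Icc, L1 m s]
  have : ((m:ℤ) + 1 - -(m:ℤ)).toNat = 2*m+1 := by omega
  rw [this]; ring

lemma L4 (t : ℕ) :
    (∑ a ∈ Icc (-(t:ℤ)) t, ∑ b ∈ Icc (-(t:ℤ)) t, ∑ c ∈ Icc (-(t:ℤ)) t, ∑ d ∈ Icc (-(t:ℤ)) t,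
        if 2 ∣ (a + b + c + d) then (1:ℕ) else 0)
      = 8*t^4 + 16*t^3 + 12*t^2 + 4*t + 1 := by
  have h1 : ∀ a ∈ Icc (-(t:ℤ)) t,
      (∑ b ∈ Icc (-(t:ℤ)) t, ∑ c ∈ Icc (-(t:ℤ)) t, ∑ d ∈ Icc (-(t:ℤ)) t,
          if 2 ∣ (a + b + c + d) then (1:ℕ) else 0)
        = (2*t+1) * ((2*t+1) * t + t) + t + (if 2 ∣ ((t:ℤ) + a) then 1 else 0) := by
    intro a _
    rw [L3 t a]
    congr 1
    exact iteCongr (by omega)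
  rw [sum_congr rfl h1, sum_add_distrib, sum_const, Int.card_Icc, L1 t t]
  have h2 : ((t:ℤ) + 1 - -(t:ℤ)).toNat = 2*t+1 := by omega
  rw [h2, if_pos (by omega)]
  ring

def gfun (r : ℕ) : ℕ := (2*r+1) * ((2*r+1) * r + r) + r + 1

lemma sumg (t : ℕ) : 2 * (∑ r ∈ range t, gfun r) + t^2 = 2*t^4 + t := by
  induction t with
  | zero => simp
  | succ t ih =>
    rw [sum_range_succ]
    set S := ∑ r ∈ range t, gfun r with hS
    zify at ih ⊢
    have hg : (gfun t : ℤ) = (2*t+1) * ((2*t+1) * t + t) + t + 1 := by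
      unfold gfun; push_cast; ring
    rw [hg]
    linear_combination ih

lemma outSum (t : ℕ) :
    (∑ x ∈ Icc (-(2*(t:ℤ))) (2*(t:ℤ)) \ Icc (-(t:ℤ)) t, gfun (2*t - x.natAbs))
      = 2 * ∑ r ∈ range t, gfun r := by
  have hsplit : Icc (-(2*(t:ℤ))) (2*(t:ℤ)) \ Icc (-(t:ℤ)) t
      = Icc (-(2*(t:ℤ))) (-(t:ℤ)-1) ∪ Icc ((t:ℤ)+1) (2*(t:ℤ)) := by
    ext x; simp [mem_Icc, mem_sdiff, mem_union]; omega
  have hdisj : Disjoint (Icc (-(2*(t:ℤ))) (-(t:ℤ)-1)) (Icc ((t:ℤ)+1) (2*(t:ℤ))) := by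
    rw [disjoint_left]; intro x hx hx'; simp [mem_Icc] at hx hx'; omega
  rw [hsplit, sum_union hdisj]
  have hneg : (∑ x ∈ Icc (-(2*(t:ℤ))) (-(t:ℤ)-1), gfun (2*t - x.natAbs))
      = ∑ x ∈ Icc ((t:ℤ)+1) (2*(t:ℤ)), gfun (2*t - x.natAbs) := by
    apply sum_nbij' (i := fun x => -x) (j := fun x => -x)
    · intro a ha; simp [mem_Icc] at ha ⊢; omega
    · intro a ha; simp [mem_Icc] at ha ⊢; omega
    · intro a _; ring
    · intro a _; ring
    · intro a _; simp
  have hre : (∑ x ∈ Icc ((t:ℤ)+1) (2*(t:ℤ)), gfun (2*t - x.natAbs))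
      = ∑ r ∈ range t, gfun r := by
    apply sum_nbij' (i := fun x => 2*t - x.natAbs) (j := fun r => 2*(t:ℤ) - r)
    · intro a ha; simp [mem_Icc] at ha; simp [mem_range]; omega
    · intro a ha; simp [mem_range] at ha; simp [mem_Icc]; omega
    · intro a ha; simp [mem_Icc] at ha; omega
    · intro a ha; simp [mem_range] at ha; omega
    · intro a _; rfl
  rw [hneg, hre]; ring

/-- The 24 linear inequalities `|x|+|y| ≤ n` for all pairs, plus parity of the sum. -/
def Pp (n a b c d : ℤ) : Prop :=
  a+b ≤ n ∧ a-b ≤ n ∧ b-a ≤ n ∧ -a-b ≤ n ∧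
  a+c ≤ n ∧ a-c ≤ n ∧ c-a ≤ n ∧ -a-c ≤ n ∧
  a+d ≤ n ∧ a-d ≤ n ∧ d-a ≤ n ∧ -a-d ≤ n ∧
  b+c ≤ n ∧ b-c ≤ n ∧ c-b ≤ n ∧ -b-c ≤ n ∧
  b+d ≤ n ∧ b-d ≤ n ∧ d-b ≤ n ∧ -b-d ≤ n ∧
  c+d ≤ n ∧ c-d ≤ n ∧ d-c ≤ n ∧ -c-d ≤ n ∧
  2 ∣ (a+b+c+d)

instance (n a b c d : ℤ) : Decidable (Pp n a b c d) := by unfold Pp; exact inferInstance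

lemma keyGen (t m : ℕ) (x : ℤ) (hx1 : t < x.natAbs) (hx2 : x.natAbs ≤ 2*t)
    (hm : (m:ℤ) = 2*(t:ℤ) - x.natAbs)
    (S1 S2 S3 : Finset ℤ)
    (h1 : Icc (-(m:ℤ)) m ⊆ S1) (h2 : Icc (-(m:ℤ)) m ⊆ S2) (h3 : Icc (-(m:ℤ)) m ⊆ S3) :
    (∑ u ∈ S1, ∑ v ∈ S2, ∑ w ∈ S3, if Pp (2*(t:ℤ)) x u v w then (1:ℕ) else 0)
      = gfun m := by
  have hz : ∀ u v w : ℤ, (u ∉ Icc (-(m:ℤ)) m ∨ v ∉ Icc (-(m:ℤ)) m ∨ w ∉ Icc (-(m:ℤ)) m) →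
      (if Pp (2*(t:ℤ)) x u v w then (1:ℕ) else 0) = 0 := by
    intro u v w h
    rw [if_neg]
    unfold Pp
    simp only [mem_Icc, not_and_or, not_le] at h
    omega
  have e1 : (∑ u ∈ S1, ∑ v ∈ S2, ∑ w ∈ S3, if Pp (2*(t:ℤ)) x u v w then (1:ℕ) else 0)
      = ∑ u ∈ Icc (-(m:ℤ)) m, ∑ v ∈ Icc (-(m:ℤ)) m, ∑ w ∈ Icc (-(m:ℤ)) m,
          if Pp (2*(t:ℤ)) x u v w then (1:ℕ) else 0 := by
    rw [← sum_subset h1 (fun u _ hu => sum_eq_zero fun v _ => sum_eq_zero fun w _ =>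
      hz u v w (Or.inl hu))]
    refine sum_congr rfl fun u hu => ?_
    rw [← sum_subset h2 (fun v _ hv => sum_eq_zero fun w _ => hz u v w (Or.inr (Or.inl hv)))]
    refine sum_congr rfl fun v hv => ?_
    rw [← sum_subset h3 (fun w _ hw => hz u v w (Or.inr (Or.inr hw)))]
  rw [e1]
  have e2 : ∀ u ∈ Icc (-(m:ℤ)) m, ∀ v ∈ Icc (-(m:ℤ)) m, ∀ w ∈ Icc (-(m:ℤ)) m,
      (if Pp (2*(t:ℤ)) x u v w then (1:ℕ) else 0) = if 2 ∣ (x + u + v + w) then 1 else 0 := by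
    intro u hu v hv w hw
    simp only [mem_Icc] at hu hv hw
    refine iteCongr ?_
    unfold Pp
    omega
  rw [sum_congr rfl fun u hu => sum_congr rfl fun v hv => sum_congr rfl fun w hw =>
    e2 u hu v hv w hw]
  rw [L3 m x, if_pos (by omega)]
  rfl

lemma mainCount (t : ℕ) :
    (∑ a ∈ Icc (-(2*(t:ℤ))) (2*(t:ℤ)), ∑ b ∈ Icc (-(2*(t:ℤ))) (2*(t:ℤ)),
     ∑ c ∈ Icc (-(2*(t:ℤ))) (2*(t:ℤ)), ∑ d ∈ Icc (-(2*(t:ℤ))) (2*(t:ℤ)),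
        if Pp (2*(t:ℤ)) a b c d then (1:ℕ) else 0)
      = 16*t^4 + 16*t^3 + 8*t^2 + 8*t + 1 := by
  set I : Finset ℤ := Icc (-(2*(t:ℤ))) (2*(t:ℤ)) with hI
  set Iin : Finset ℤ := Icc (-(t:ℤ)) (t:ℤ) with hIin
  have hsub : Iin ⊆ I := by intro x; simp only [hI, hIin, mem_Icc]; omega
  have hout : ∀ x ∈ I \ Iin, t < x.natAbs ∧ x.natAbs ≤ 2*t := by
    intro x hx; simp only [hI, hIin, mem_sdiff, mem_Icc, not_and, not_le] at hx; omega
  have hJin : ∀ x ∈ I \ Iin,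
      Icc (-(((2*t - x.natAbs : ℕ)):ℤ)) ((2*t - x.natAbs : ℕ):ℤ) ⊆ Iin := by
    intro x hx y hy
    have h := hout x hx
    simp only [mem_Icc] at hy
    simp only [hIin, mem_Icc]
    omega
  have hJI : ∀ x ∈ I \ Iin,
      Icc (-(((2*t - x.natAbs : ℕ)):ℤ)) ((2*t - x.natAbs : ℕ):ℤ) ⊆ I :=
    fun x hx => (hJin x hx).trans hsub
  have hm : ∀ x ∈ I \ Iin, (((2*t - x.natAbs : ℕ)):ℤ) = 2*(t:ℤ) - x.natAbs := by
    intro x hx; have := hout x hx; omega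
  have key1 : ∀ x ∈ I \ Iin,
      (∑ b ∈ I, ∑ c ∈ I, ∑ d ∈ I, if Pp (2*(t:ℤ)) x b c d then (1:ℕ) else 0)
        = gfun (2*t - x.natAbs) := fun x hx =>
    keyGen t _ x (hout x hx).1 (hout x hx).2 (hm x hx) I I I (hJI x hx) (hJI x hx) (hJI x hx)
  have key2 : ∀ x ∈ I \ Iin,
      (∑ a ∈ Iin, ∑ c ∈ I, ∑ d ∈ I, if Pp (2*(t:ℤ)) a x c d then (1:ℕ) else 0)
        = gfun (2*t - x.natAbs) := by
    intro x hx
    rw [sum_congr rfl fun a _ => sum_congr rfl fun c _ => sum_congr rfl fun d _ =>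
      iteCongr (show Pp (2*(t:ℤ)) a x c d ↔ Pp (2*(t:ℤ)) x a c d by unfold Pp; omega)]
    exact keyGen t _ x (hout x hx).1 (hout x hx).2 (hm x hx) Iin I I
      (hJin x hx) (hJI x hx) (hJI x hx)
  have key3 : ∀ x ∈ I \ Iin,
      (∑ a ∈ Iin, ∑ b ∈ Iin, ∑ d ∈ I, if Pp (2*(t:ℤ)) a b x d then (1:ℕ) else 0)
        = gfun (2*t - x.natAbs) := by
    intro x hx
    rw [sum_congr rfl fun a _ => sum_congr rfl fun b _ => sum_congr rfl fun d _ =>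
      iteCongr (show Pp (2*(t:ℤ)) a b x d ↔ Pp (2*(t:ℤ)) x a b d by unfold Pp; omega)]
    exact keyGen t _ x (hout x hx).1 (hout x hx).2 (hm x hx) Iin Iin I
      (hJin x hx) (hJin x hx) (hJI x hx)
  have key4 : ∀ x ∈ I \ Iin,
      (∑ a ∈ Iin, ∑ b ∈ Iin, ∑ c ∈ Iin, if Pp (2*(t:ℤ)) a b c x then (1:ℕ) else 0)
        = gfun (2*t - x.natAbs) := by
    intro x hx
    rw [sum_congr rfl fun a _ => sum_congr rfl fun b _ => sum_congr rfl fun c _ =>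
      iteCongr (show Pp (2*(t:ℤ)) a b c x ↔ Pp (2*(t:ℤ)) x a b c by unfold Pp; omega)]
    exact keyGen t _ x (hout x hx).1 (hout x hx).2 (hm x hx) Iin Iin Iin
      (hJin x hx) (hJin x hx) (hJin x hx)
  have allin : (∑ a ∈ Iin, ∑ b ∈ Iin, ∑ c ∈ Iin, ∑ d ∈ Iin,
      if Pp (2*(t:ℤ)) a b c d then (1:ℕ) else 0) = 8*t^4 + 16*t^3 + 12*t^2 + 4*t + 1 := by
    rw [sum_congr rfl fun a ha => sum_congr rfl fun b hb => sum_congr rfl fun c hc =>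
      sum_congr rfl fun d hd => iteCongr (by
        simp only [hIin, mem_Icc] at ha hb hc hd
        unfold Pp
        omega : Pp (2*(t:ℤ)) a b c d ↔ 2 ∣ (a+b+c+d))]
    exact L4 t
  have G2 := outSum t
  rw [show (Icc (-(2*(t:ℤ))) (2*(t:ℤ)) \ Icc (-(t:ℤ)) t) = I \ Iin by rw [hI, hIin]] at G2
  rw [← sum_sdiff hsub]
  rw [sum_congr rfl key1, G2]
  have splitb : (∑ a ∈ Iin, ∑ b ∈ I, ∑ c ∈ I, ∑ d ∈ I,
      if Pp (2*(t:ℤ)) a b c d then (1:ℕ) else 0)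
      = (∑ a ∈ Iin, ((∑ b ∈ I \ Iin, ∑ c ∈ I, ∑ d ∈ I, if Pp (2*(t:ℤ)) a b c d then (1:ℕ) else 0)
          + ∑ b ∈ Iin, ∑ c ∈ I, ∑ d ∈ I, if Pp (2*(t:ℤ)) a b c d then (1:ℕ) else 0)) :=
    sum_congr rfl fun a _ => (sum_sdiff hsub).symm
  rw [splitb, sum_add_distrib, sum_comm (s := Iin) (t := I \ Iin), sum_congr rfl key2, G2]
  have splitc : (∑ a ∈ Iin, ∑ b ∈ Iin, ∑ c ∈ I, ∑ d ∈ I,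
      if Pp (2*(t:ℤ)) a b c d then (1:ℕ) else 0)
      = (∑ a ∈ Iin, ∑ b ∈ Iin, ((∑ c ∈ I \ Iin, ∑ d ∈ I, if Pp (2*(t:ℤ)) a b c d then (1:ℕ) else 0)
          + ∑ c ∈ Iin, ∑ d ∈ I, if Pp (2*(t:ℤ)) a b c d then (1:ℕ) else 0)) :=
    sum_congr rfl fun a _ => sum_congr rfl fun b _ => (sum_sdiff hsub).symm
  rw [splitc]
  simp only [sum_add_distrib]
  rw [show (∑ a ∈ Iin, ∑ b ∈ Iin, ∑ c ∈ I \ Iin, ∑ d ∈ I,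
        if Pp (2*(t:ℤ)) a b c d then (1:ℕ) else 0)
      = ∑ c ∈ I \ Iin, ∑ a ∈ Iin, ∑ b ∈ Iin, ∑ d ∈ I,
        if Pp (2*(t:ℤ)) a b c d then (1:ℕ) else 0 by
    rw [sum_congr rfl fun a (_ : a ∈ Iin) => sum_comm]; exact sum_comm]
  rw [sum_congr rfl key3, G2]
  have splitd : (∑ a ∈ Iin, ∑ b ∈ Iin, ∑ c ∈ Iin, ∑ d ∈ I,
      if Pp (2*(t:ℤ)) a b c d then (1:ℕ) else 0)
      = (∑ a ∈ Iin, ∑ b ∈ Iin, ∑ c ∈ Iin, ((∑ d ∈ I \ Iin, if Pp (2*(t:ℤ)) a b c d then (1:ℕ) else 0)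
          + ∑ d ∈ Iin, if Pp (2*(t:ℤ)) a b c d then (1:ℕ) else 0)) :=
    sum_congr rfl fun a _ => sum_congr rfl fun b _ => sum_congr rfl fun c _ =>
      (sum_sdiff hsub).symm
  rw [splitd]
  simp only [sum_add_distrib]
  rw [show (∑ a ∈ Iin, ∑ b ∈ Iin, ∑ c ∈ Iin, ∑ d ∈ I \ Iin,
        if Pp (2*(t:ℤ)) a b c d then (1:ℕ) else 0)
      = ∑ d ∈ I \ Iin, ∑ a ∈ Iin, ∑ b ∈ Iin, ∑ c ∈ Iin,
        if Pp (2*(t:ℤ)) a b c d then (1:ℕ) else 0 by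
    rw [sum_congr rfl fun a (_ : a ∈ Iin) => sum_congr rfl fun b (_ : b ∈ Iin) => sum_comm]
    rw [sum_congr rfl fun a (_ : a ∈ Iin) => sum_comm]
    exact sum_comm]
  rw [sum_congr rfl key4, G2, allin]
  have hs := sumg t
  zify at hs ⊢
  linear_combination 4 * hs

/- ### Bridge from the real statement to the integer count -/

lemma ipSingle (u : Fin 4 → ℝ) (i : Fin 4) : innerProd u (stdBasis 4 i) = u i := by
  unfold innerProd stdBasis
  simp [mul_ite]

lemma ipNeg (u v : Fin 4 → ℝ) : innerProd u (-v) = -innerProd u v := by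
  unfold innerProd
  simp [mul_neg, Finset.sum_neg_distrib]

lemma ipPair (u : Fin 4 → ℝ) (i j : Fin 4) (hij : i ≠ j) (ε δ : ℝ) :
    innerProd u (ε • stdBasis 4 i + δ • stdBasis 4 j) = ε * u i + δ * u j := by
  unfold innerProd stdBasis
  fin_cases i <;> fin_cases j <;> simp_all [Fin.sum_univ_four] <;> ring

lemma ipHalf (u v : Fin 4 → ℝ) :
    innerProd u v = u 0 * v 0 + u 1 * v 1 + u 2 * v 2 + u 3 * v 3 := by
  unfold innerProd; exact Fin.sum_univ_four _

lemma memA (i : Fin 4) : stdBasis 4 i ∈ typeF := Or.inl (Or.inl ⟨i, Or.inl rfl⟩)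
lemma memA' (i : Fin 4) : -stdBasis 4 i ∈ typeF := Or.inl (Or.inl ⟨i, Or.inr rfl⟩)
lemma memB (i j : Fin 4) (hij : i < j) (ε δ : ℝ) (hε : ε = 1 ∨ ε = -1) (hδ : δ = 1 ∨ δ = -1) :
    ε • stdBasis 4 i + δ • stdBasis 4 j ∈ typeF :=
  Or.inl (Or.inr ⟨i, j, hij, ε, δ, hε, hδ, rfl⟩)

lemma pairBound {x y n : ℝ} (h1 : x + y ≤ n) (h2 : x - y ≤ n) (h3 : y - x ≤ n)
    (h4 : -x - y ≤ n) : |x| + |y| ≤ n := by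
  rcases abs_cases x with ⟨e,_⟩|⟨e,_⟩ <;> rcases abs_cases y with ⟨f,_⟩|⟨f,_⟩ <;>
    rw [e,f] <;> linarith

lemma abs4 (w x y z : ℝ) : |w+x+y+z| ≤ |w|+|x|+|y|+|z| := by
  have h1 := abs_add_le (w+x+y) z; have h2 := abs_add_le (w+x) y; have h3 := abs_add_le w x
  linarith

noncomputable def phiQ (p : ℤ×ℤ×ℤ×ℤ) : Fin 4 → ℝ :=
  ![(p.1:ℝ), (p.2.1:ℝ), (p.2.2.1:ℝ), (p.2.2.2:ℝ)]

lemma phiQ_inj : Function.Injective phiQ := by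
  rintro ⟨a,b,c,d⟩ ⟨a',b',c',d'⟩ h
  have h0 := congrFun h 0
  have h1 := congrFun h 1
  have h2 := congrFun h 2
  have h3 := congrFun h 3
  simp [phiQ] at h0 h1 h2 h3
  simp_all

lemma setEq (q : ℕ) :
    {u | u ∈ evenLattice ∧ ∀ v ∈ typeF, |innerProd u v| ≤ (q : ℝ)}
      = phiQ '' ↑((Icc (-(q:ℤ)) q ×ˢ Icc (-(q:ℤ)) q ×ˢ Icc (-(q:ℤ)) q ×ˢ Icc (-(q:ℤ)) q).filter
          fun p => Pp q p.1 p.2.1 p.2.2.1 p.2.2.2) := by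
  ext u
  constructor
  · rintro ⟨⟨hint, m, hm⟩, hroots⟩
    choose g hg using hint
    have hpair : ∀ i j : Fin 4, i < j →
        (-(q:ℤ) ≤ g i + g j ∧ (g i + g j : ℤ) ≤ q) ∧ (-(q:ℤ) ≤ g i - g j ∧ (g i - g j : ℤ) ≤ q) := by
      intro i j hij
      have h1 := hroots _ (memB i j hij 1 1 (Or.inl rfl) (Or.inl rfl))
      have h2 := hroots _ (memB i j hij 1 (-1) (Or.inl rfl) (Or.inr rfl))
      rw [ipPair u i j hij.ne] at h1 h2
      rw [hg i, hg j] at h1 h2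
      have h1' : |(g i + g j : ℤ)| ≤ (q:ℤ) := by
        have : |((g i + g j : ℤ) : ℝ)| ≤ (q:ℝ) := by push_cast; convert h1 using 2; ring
        exact_mod_cast this
      have h2' : |(g i - g j : ℤ)| ≤ (q:ℤ) := by
        have : |((g i - g j : ℤ) : ℝ)| ≤ (q:ℝ) := by push_cast; convert h2 using 2; ring
        exact_mod_cast this
      exact ⟨abs_le.mp h1', abs_le.mp h2'⟩
    have hsingle : ∀ i, (-(q:ℤ) ≤ g i ∧ g i ≤ (q:ℤ)) := by
      intro i
      have h1 := hroots _ (memA i)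
      rw [ipSingle, hg i] at h1
      have : |(g i : ℤ)| ≤ (q:ℤ) := by exact_mod_cast h1
      exact abs_le.mp this
    have hpar : g 0 + g 1 + g 2 + g 3 = 2 * m := by
      rw [Fin.sum_univ_four, hg 0, hg 1, hg 2, hg 3] at hm
      exact_mod_cast hm
    refine ⟨(g 0, g 1, g 2, g 3), ?_, ?_⟩
    · simp only [coe_filter, Set.mem_setOf_eq, mem_product, mem_Icc]
      have h01 := hpair 0 1 (by decide)
      have h02 := hpair 0 2 (by decide)
      have h03 := hpair 0 3 (by decide)
      have h12 := hpair 1 2 (by decide)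
      have h13 := hpair 1 3 (by decide)
      have h23 := hpair 2 3 (by decide)
      have hs0 := hsingle 0; have hs1 := hsingle 1
      have hs2 := hsingle 2; have hs3 := hsingle 3
      refine ⟨⟨?_, ?_, ?_, ?_⟩, ?_⟩
      · omega
      · omega
      · omega
      · omega
      · unfold Pp; omega
    · funext i
      fin_cases i <;> simp [phiQ] <;> rw [hg] <;> rfl
  · rintro ⟨⟨a,b,c,d⟩, hp, rfl⟩
    simp only [coe_filter, Set.mem_setOf_eq, mem_product, mem_Icc] at hp
    obtain ⟨-, hP⟩ := hp
    unfold Pp at hP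
    have u0 : phiQ (a,b,c,d) 0 = (a:ℝ) := by simp [phiQ]
    have u1 : phiQ (a,b,c,d) 1 = (b:ℝ) := by simp [phiQ]
    have u2 : phiQ (a,b,c,d) 2 = (c:ℝ) := by simp [phiQ]
    have u3 : phiQ (a,b,c,d) 3 = (d:ℝ) := by simp [phiQ]
    have Hab : |(a:ℝ)| + |(b:ℝ)| ≤ (q:ℝ) :=
      pairBound (by exact_mod_cast hP.1) (by exact_mod_cast hP.2.1)
        (by exact_mod_cast hP.2.2.1) (by exact_mod_cast hP.2.2.2.1)
    have Hac : |(a:ℝ)| + |(c:ℝ)| ≤ (q:ℝ) :=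
      pairBound (by exact_mod_cast hP.2.2.2.2.1) (by exact_mod_cast hP.2.2.2.2.2.1)
        (by exact_mod_cast hP.2.2.2.2.2.2.1) (by exact_mod_cast hP.2.2.2.2.2.2.2.1)
    have Had : |(a:ℝ)| + |(d:ℝ)| ≤ (q:ℝ) :=
      pairBound (by exact_mod_cast hP.2.2.2.2.2.2.2.2.1)
        (by exact_mod_cast hP.2.2.2.2.2.2.2.2.2.1)
        (by exact_mod_cast hP.2.2.2.2.2.2.2.2.2.2.1)
        (by exact_mod_cast hP.2.2.2.2.2.2.2.2.2.2.2.1)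
    have Hbc : |(b:ℝ)| + |(c:ℝ)| ≤ (q:ℝ) :=
      pairBound (by exact_mod_cast hP.2.2.2.2.2.2.2.2.2.2.2.2.1)
        (by exact_mod_cast hP.2.2.2.2.2.2.2.2.2.2.2.2.2.1)
        (by exact_mod_cast hP.2.2.2.2.2.2.2.2.2.2.2.2.2.2.1)
        (by exact_mod_cast hP.2.2.2.2.2.2.2.2.2.2.2.2.2.2.2.1)
    have Hbd : |(b:ℝ)| + |(d:ℝ)| ≤ (q:ℝ) :=
      pairBound (by exact_mod_cast hP.2.2.2.2.2.2.2.2.2.2.2.2.2.2.2.2.1)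
        (by exact_mod_cast hP.2.2.2.2.2.2.2.2.2.2.2.2.2.2.2.2.2.1)
        (by exact_mod_cast hP.2.2.2.2.2.2.2.2.2.2.2.2.2.2.2.2.2.2.1)
        (by exact_mod_cast hP.2.2.2.2.2.2.2.2.2.2.2.2.2.2.2.2.2.2.2.1)
    have Hcd : |(c:ℝ)| + |(d:ℝ)| ≤ (q:ℝ) :=
      pairBound (by exact_mod_cast hP.2.2.2.2.2.2.2.2.2.2.2.2.2.2.2.2.2.2.2.2.1)
        (by exact_mod_cast hP.2.2.2.2.2.2.2.2.2.2.2.2.2.2.2.2.2.2.2.2.2.1)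
        (by exact_mod_cast hP.2.2.2.2.2.2.2.2.2.2.2.2.2.2.2.2.2.2.2.2.2.2.1)
        (by exact_mod_cast hP.2.2.2.2.2.2.2.2.2.2.2.2.2.2.2.2.2.2.2.2.2.2.2.1)
    have hdvd : 2 ∣ (a+b+c+d) := hP.2.2.2.2.2.2.2.2.2.2.2.2.2.2.2.2.2.2.2.2.2.2.2.2
    have Ha : |(a:ℝ)| ≤ (q:ℝ) := by have := abs_nonneg (b:ℝ); linarith
    have Hb : |(b:ℝ)| ≤ (q:ℝ) := by have := abs_nonneg (a:ℝ); linarith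
    have Hc : |(c:ℝ)| ≤ (q:ℝ) := by have := abs_nonneg (a:ℝ); linarith
    have Hd : |(d:ℝ)| ≤ (q:ℝ) := by have := abs_nonneg (a:ℝ); linarith
    constructor
    · refine ⟨fun i => ?_, ?_⟩
      · fin_cases i
        · exact ⟨a, by simp [phiQ]⟩
        · exact ⟨b, by simp [phiQ]⟩
        · exact ⟨c, by simp [phiQ]⟩
        · exact ⟨d, by simp [phiQ]⟩
      · obtain ⟨k, hk⟩ := hdvd
        refine ⟨k, ?_⟩
        rw [Fin.sum_univ_four, u0, u1, u2, u3]
        exact_mod_cast congrArg (Int.cast : ℤ → ℝ) hk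
    · rintro v ((⟨i, hv | hv⟩ | ⟨i, j, hij, ε, δ, hε, hδ, rfl⟩) | hhalf)
      · subst hv
        rw [ipSingle]
        fin_cases i
        · simpa [phiQ] using Ha
        · simpa [phiQ] using Hb
        · simpa [phiQ] using Hc
        · simpa [phiQ] using Hd
      · subst hv
        rw [ipNeg, abs_neg, ipSingle]
        fin_cases i
        · simpa [phiQ] using Ha
        · simpa [phiQ] using Hb
        · simpa [phiQ] using Hc
        · simpa [phiQ] using Hd
      · rw [ipPair _ i j hij.ne]
        have key : ∀ x y : ℝ, |x| + |y| ≤ (q:ℝ) → |ε * x + δ * y| ≤ (q:ℝ) := by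
          intro x y hxy
          refine (abs_add_le _ _).trans ?_
          rw [abs_mul, abs_mul]
          rcases hε with rfl | rfl <;> rcases hδ with rfl | rfl <;> norm_num <;> linarith
        fin_cases i <;> fin_cases j <;>
          first
            | exact absurd hij (by decide)
            | simpa [phiQ] using key _ _ Hab
            | simpa [phiQ] using key _ _ Hac
            | simpa [phiQ] using key _ _ Had
            | simpa [phiQ] using key _ _ Hbc
            | simpa [phiQ] using key _ _ Hbd
            | simpa [phiQ] using key _ _ Hcd
      · rw [ipHalf, u0, u1, u2, u3]
        have hv : ∀ i, |v i| = 1/2 := by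
          intro i; rcases hhalf i with h | h <;> rw [h] <;> norm_num
        refine (abs4 _ _ _ _).trans ?_
        rw [abs_mul, abs_mul, abs_mul, abs_mul, hv 0, hv 1, hv 2, hv 3]
        linarith

/-- Ehrhart count in type `F_4`, even case: for every even `q ≥ 0`, the number of points
`u` of the dual lattice `M` of the `F_4` root lattice with `|⟨u,v⟩| ≤ q` for all roots `v`
(i.e. lattice points of the dilate `q·F` of the diagonal splitting polytope) is
`q⁴ + 2q³ + 2q² + 4q + 1`. -/
theorem typeF_ehrhart_even (q : ℕ) (hq : Even q) :
    {u | u ∈ evenLattice ∧ ∀ v ∈ typeF, |innerProd u v| ≤ (q : ℝ)}.ncard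
      = q ^ 4 + 2 * q ^ 3 + 2 * q ^ 2 + 4 * q + 1 := by
  obtain ⟨t, ht⟩ := hq
  rw [setEq q, Set.ncard_image_of_injective _ phiQ_inj, Set.ncard_coe_finset]
  rw [card_filter]
  simp only [Finset.sum_product]
  have hq2 : (q:ℤ) = 2*(t:ℤ) := by omega
  rw [hq2, mainCount t]
  subst ht
  ring
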